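/- Let p be a prime and let α, β ∈ ℚ_p with ‖α‖_p = 1 and ‖β‖_p ≤ 1 be such that the polynomial X² − βX − α (which then has coefficients in ℤ_p) has no root modulo p (the inert case). Set Δ = [[0, α], [1, β]], let T_Δ be the centralizer of Δ in GL₂(ℚ_p), and put d_j = [[1, 0], [0, p^j]] and w = [[0, 1], [1, 0]]. Then the double cosets T_Δ d_j I_p (j ≥ 0) and T_Δ d_j w I_p (j ≥ 1) are pairwise disjoint and their union is GL₂(ℚ_p); that is, they form a complete set of distinct representatives of T_Δ\GL₂(ℚ_p)/I_p. -/

import Mathlib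

set_option maxHeartbeats 2000000


/-- The matrix `d_j = [[1, 0], [0, p^j]]` over `ℚ_p`. -/
noncomputable def dMat (p : ℕ) [Fact (Nat.Prime p)] (j : ℕ) : Matrix (Fin 2) (Fin 2) ℚ_[p] :=
  !![1, 0; 0, (p : ℚ_[p]) ^ j]

/-- The maximal compact subgroup `K_p = GL₂(ℤ_p)`, viewed as the set of invertible matrices
`k` over `ℚ_p` such that all entries of `k` and of `k⁻¹` have norm at most `1`. -/
def Kp (p : ℕ) [Fact (Nat.Prime p)] : Set (Matrix (Fin 2) (Fin 2) ℚ_[p]) :=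
  {k | IsUnit k ∧ ∀ i j, ‖k i j‖ ≤ 1 ∧ ‖k⁻¹ i j‖ ≤ 1}

/-- The Iwahori subgroup: elements of `K_p` whose lower-left entry has norm `< 1`. -/
def Ip (p : ℕ) [Fact (Nat.Prime p)] : Set (Matrix (Fin 2) (Fin 2) ℚ_[p]) :=
  {k | k ∈ Kp p ∧ ‖k 1 0‖ < 1}

/-- Representatives of `T_Δ\GL₂(ℚ_p)/I_p` in the inert case: `d_j` (j ≥ 0) and `d_j·w`
(j ≥ 1), where `w = [[0,1],[1,0]]`. -/
noncomputable def rep18 (p : ℕ) [Fact (Nat.Prime p)] :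
    ℕ ⊕ {j : ℕ // 1 ≤ j} → Matrix (Fin 2) (Fin 2) ℚ_[p]
  | Sum.inl j => dMat p j
  | Sum.inr j => dMat p j.1 * !![0, 1; 1, 0]



namespace Aux18

variable (p : ℕ) [Fact (Nat.Prime p)]

lemma pR_pos : (0:ℝ) < p := by exact_mod_cast (Fact.out : p.Prime).pos

lemma one_lt_pR : (1:ℝ) < p := by exact_mod_cast (Fact.out : p.Prime).one_lt

lemma pQ_ne : ((p : ℚ_[p])) ≠ 0 := by
  exact_mod_cast Nat.cast_ne_zero.mpr (Fact.out : p.Prime).ne_zero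

lemma norm_p_le_one : ‖(p : ℚ_[p])‖ ≤ 1 := by
  rw [Padic.norm_p]
  exact inv_le_one_of_one_le₀ (one_lt_pR p).le

lemma norm_p_pow_le_one (j : ℕ) : ‖(p : ℚ_[p]) ^ j‖ ≤ 1 := by
  rw [norm_pow]
  exact pow_le_one₀ (norm_nonneg _) (norm_p_le_one p)

variable {p}

/-- norm < 1 implies norm ≤ 1/p -/
lemma norm_le_inv_p {z : ℚ_[p]} (h : ‖z‖ < 1) : ‖z‖ ≤ (p : ℝ)⁻¹ := by
  have := (Padic.norm_le_pow_iff_norm_lt_pow_add_one z (-1)).mpr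
  simp only [neg_add_cancel, zpow_zero, zpow_neg_one] at this
  exact this h

lemma val_decomp {z : ℚ_[p]} (hz : z ≠ 0) :
    ∃ (n : ℤ) (u : ℚ_[p]), ‖u‖ = 1 ∧ z = u * (p : ℚ_[p]) ^ n ∧ ‖z‖ = (p:ℝ) ^ (-n) := by
  refine ⟨z.valuation, z * (p : ℚ_[p]) ^ (-z.valuation), ?_, ?_, Padic.norm_eq_zpow_neg_valuation hz⟩
  · rw [norm_mul, Padic.norm_p_zpow, Padic.norm_eq_zpow_neg_valuation hz, neg_neg,
      ← Real.rpow_intCast, ← Real.rpow_intCast, ← Real.rpow_add (pR_pos p)]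
    push_cast
    simp
  · rw [mul_assoc, ← zpow_add₀ (pQ_ne p), neg_add_cancel, zpow_zero, mul_one]

lemma nonarch (a b : ℚ_[p]) : ‖a + b‖ ≤ max ‖a‖ ‖b‖ := Padic.nonarchimedean a b

lemma nonarch_sub (a b : ℚ_[p]) : ‖a - b‖ ≤ max ‖a‖ ‖b‖ := by
  rw [sub_eq_add_neg]
  simpa using Padic.nonarchimedean a (-b)

/-- Fact A: the quadratic norm formula. -/
lemma normQuad {α β : ℚ_[p]} (hα : ‖α‖ = 1) (hβ : ‖β‖ ≤ 1)
    (hirr : ∀ x : ℚ_[p], ‖x‖ ≤ 1 → 1 ≤ ‖x^2 - β * x - α‖) (a c : ℚ_[p]) :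
    ‖a^2 + a*β*c - c^2*α‖ = max ‖a‖ ‖c‖ ^ 2 := by
  rcases le_or_gt ‖a‖ ‖c‖ with h1 | h2
  · rw [max_eq_right h1]
    by_cases hc : c = 0
    · have ha : a = 0 := by
        have : ‖a‖ ≤ 0 := by simpa [hc] using h1
        simpa using le_antisymm this (norm_nonneg a)
      simp [ha, hc]
    · set x : ℚ_[p] := -(a/c) with hxdef
      have hx : ‖x‖ ≤ 1 := by
        rw [hxdef, norm_neg, norm_div]
        exact div_le_one_of_le₀ h1 (norm_nonneg c)
      have key : a^2 + a*β*c - c^2*α = c^2 * (x^2 - β*x - α) := by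
        rw [hxdef]
        field_simp
        ring
      have hup : ‖x^2 - β*x - α‖ ≤ 1 := by
        refine le_trans (nonarch_sub _ _) (max_le (le_trans (nonarch_sub _ _) (max_le ?_ ?_)) hα.le)
        · rw [norm_pow]; exact pow_le_one₀ (norm_nonneg _) hx
        · rw [norm_mul]; exact mul_le_one₀ hβ (norm_nonneg _) hx
      have hone : ‖x^2 - β*x - α‖ = 1 := le_antisymm hup (hirr x hx)
      rw [key, norm_mul, norm_pow, hone, mul_one]
  · rw [max_eq_left h2.le]
    have ha : a ≠ 0 := by
      intro h; rw [h, norm_zero] at h2; exact absurd h2 (not_lt.mpr (norm_nonneg c))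
    set z : ℚ_[p] := β*(c/a) - α*(c/a)^2 with hzdef
    have hca : ‖c/a‖ < 1 := by
      rw [norm_div]
      exact (div_lt_one (lt_of_le_of_lt (norm_nonneg c) h2)).mpr h2
    have hz : ‖z‖ < 1 := by
      refine lt_of_le_of_lt (nonarch_sub _ _) (max_lt ?_ ?_)
      · rw [norm_mul]
        exact lt_of_le_of_lt (mul_le_of_le_one_left (norm_nonneg _) hβ) hca
      · rw [norm_mul, norm_pow, hα, one_mul]
        exact lt_of_le_of_lt (pow_le_of_le_one (norm_nonneg _) hca.le (by norm_num)) hca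
    have key : a^2 + a*β*c - c^2*α = a^2 * (1 + z) := by
      rw [hzdef]
      field_simp
      ring
    have hone : ‖(1:ℚ_[p]) + z‖ = 1 := by
      rw [Padic.add_eq_max_of_ne (by rw [norm_one]; exact (ne_of_gt (by simpa using hz)))]
      rw [norm_one]
      exact max_eq_left hz.le
    rw [key, norm_mul, norm_pow, hone, mul_one]


variable (p : ℕ) [Fact (Nat.Prime p)]

local notation "M2" => Matrix (Fin 2) (Fin 2) ℚ_[p]

variable {p}

lemma one_le_of_inv_le_one {x : ℝ} (hx : 0 < x) (h : x⁻¹ ≤ 1) : 1 ≤ x := by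
  nlinarith [mul_pos hx (inv_pos.mpr hx), mul_inv_cancel₀ (ne_of_gt hx)]

lemma det_norm_le_one {A : M2} (h : ∀ i j, ‖A i j‖ ≤ 1) : ‖A.det‖ ≤ 1 := by
  rw [Matrix.det_fin_two]
  refine le_trans (nonarch_sub _ _) (max_le ?_ ?_) <;>
    · rw [norm_mul]
      exact mul_le_one₀ (h _ _) (norm_nonneg _) (h _ _)

lemma mem_Kp_of {A : M2} (h : ∀ i j, ‖A i j‖ ≤ 1) (hdet : ‖A.det‖ = 1) : A ∈ Kp p := by
  have hd0 : A.det ≠ 0 := by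
    intro h0; rw [h0, norm_zero] at hdet; norm_num at hdet
  have hu : IsUnit A.det := isUnit_iff_ne_zero.mpr hd0
  refine ⟨(Matrix.isUnit_iff_isUnit_det A).mpr hu, fun i j => ⟨h i j, ?_⟩⟩
  have hinv : A⁻¹ = (A.det)⁻¹ • A.adjugate := by
    rw [Matrix.inv_def, Ring.inverse_eq_inv']
  rw [hinv, Matrix.smul_apply, smul_eq_mul, norm_mul, norm_inv, hdet, inv_one, one_mul]
  have hadj : A.adjugate = !![A 1 1, -(A 0 1); -(A 1 0), A 0 0] := Matrix.adjugate_fin_two A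
  rw [hadj]
  fin_cases i <;> fin_cases j <;> simp <;> exact h _ _

lemma mem_Ip_of {A : M2} (h : ∀ i j, ‖A i j‖ ≤ 1) (h10 : ‖A 1 0‖ < 1)
    (hdet : ‖A.det‖ = 1) : A ∈ Ip p := ⟨mem_Kp_of h hdet, h10⟩

lemma Kp_entry_le {A : M2} (hA : A ∈ Kp p) : ∀ i j, ‖A i j‖ ≤ 1 := fun i j => (hA.2 i j).1

lemma Kp_inv_entry_le {A : M2} (hA : A ∈ Kp p) : ∀ i j, ‖A⁻¹ i j‖ ≤ 1 := fun i j => (hA.2 i j).2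

lemma Kp_det_norm {A : M2} (hA : A ∈ Kp p) : ‖A.det‖ = 1 := by
  have h1 : ‖A.det‖ ≤ 1 := det_norm_le_one (Kp_entry_le hA)
  have h2 : ‖A⁻¹.det‖ ≤ 1 := det_norm_le_one (Kp_inv_entry_le hA)
  have hud : IsUnit A.det := (Matrix.isUnit_iff_isUnit_det A).mp hA.1
  have hd0 : A.det ≠ 0 := hud.ne_zero
  rw [Matrix.det_nonsing_inv, Ring.inverse_eq_inv', norm_inv] at h2
  exact le_antisymm h1 (one_le_of_inv_le_one (norm_pos_iff.mpr hd0) h2)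

lemma mul_entry_norm_le {A B : M2} (hA : ∀ i j, ‖A i j‖ ≤ 1) (hB : ∀ i j, ‖B i j‖ ≤ 1) :
    ∀ i j, ‖(A * B) i j‖ ≤ 1 := by
  intro i j
  have : (A * B) i j = A i 0 * B 0 j + A i 1 * B 1 j := by
    simp [Matrix.mul_apply, Fin.sum_univ_two]
  rw [this]
  refine le_trans (nonarch _ _) (max_le ?_ ?_) <;>
    · rw [norm_mul]; exact mul_le_one₀ (hA _ _) (norm_nonneg _) (hB _ _)

lemma Kp_mul {A B : M2} (hA : A ∈ Kp p) (hB : B ∈ Kp p) : A * B ∈ Kp p := by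
  refine mem_Kp_of (mul_entry_norm_le (Kp_entry_le hA) (Kp_entry_le hB)) ?_
  rw [Matrix.det_mul, norm_mul, Kp_det_norm hA, Kp_det_norm hB, mul_one]

lemma Ip_mul {A B : M2} (hA : A ∈ Ip p) (hB : B ∈ Ip p) : A * B ∈ Ip p := by
  refine ⟨Kp_mul hA.1 hB.1, ?_⟩
  have : (A * B) 1 0 = A 1 0 * B 0 0 + A 1 1 * B 1 0 := by
    simp [Matrix.mul_apply, Fin.sum_univ_two]
  rw [this]
  refine lt_of_le_of_lt (nonarch _ _) (max_lt ?_ ?_)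
  · rw [norm_mul]
    exact lt_of_le_of_lt (mul_le_of_le_one_right (norm_nonneg _) (Kp_entry_le hB.1 0 0)) hA.2
  · rw [norm_mul]
    exact lt_of_le_of_lt (mul_le_of_le_one_left (norm_nonneg _) (Kp_entry_le hA.1 1 1)) hB.2

/-- max of entry norms -/
noncomputable def Mx (A : M2) : ℝ := max (max ‖A 0 0‖ ‖A 0 1‖) (max ‖A 1 0‖ ‖A 1 1‖)

lemma entry_le_Mx (A : M2) (i j : Fin 2) : ‖A i j‖ ≤ Mx A := by
  fin_cases i <;> fin_cases j <;> unfold Mx <;>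
    simp [le_max_iff, le_refl, true_or, or_true]

lemma Mx_nonneg (A : M2) : 0 ≤ Mx A := le_trans (norm_nonneg _) (entry_le_Mx A 0 0)

lemma Mx_le {A : M2} {r : ℝ} (h : ∀ i j, ‖A i j‖ ≤ r) : Mx A ≤ r := by
  unfold Mx
  exact max_le (max_le (h 0 0) (h 0 1)) (max_le (h 1 0) (h 1 1))

lemma Mx_mul_le_right {A B : M2} (hA : ∀ i j, ‖A i j‖ ≤ 1) : Mx (A * B) ≤ Mx B := by
  refine Mx_le fun i j => ?_
  have : (A * B) i j = A i 0 * B 0 j + A i 1 * B 1 j := by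
    simp [Matrix.mul_apply, Fin.sum_univ_two]
  rw [this]
  refine le_trans (nonarch _ _) (max_le ?_ ?_) <;>
    · rw [norm_mul]
      calc _ ≤ 1 * ‖B _ j‖ := by
              exact mul_le_mul_of_nonneg_right (hA _ _) (norm_nonneg _)
        _ ≤ Mx B := by rw [one_mul]; exact entry_le_Mx B _ j

lemma Mx_mul_le_left {A B : M2} (hB : ∀ i j, ‖B i j‖ ≤ 1) : Mx (A * B) ≤ Mx A := by
  refine Mx_le fun i j => ?_
  have : (A * B) i j = A i 0 * B 0 j + A i 1 * B 1 j := by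
    simp [Matrix.mul_apply, Fin.sum_univ_two]
  rw [this]
  refine le_trans (nonarch _ _) (max_le ?_ ?_) <;>
    · rw [norm_mul]
      calc _ ≤ ‖A i _‖ * 1 := by
              exact mul_le_mul_of_nonneg_left (hB _ _) (norm_nonneg _)
        _ ≤ Mx A := by rw [mul_one]; exact entry_le_Mx A i _

lemma Mx_Kp_left {A B : M2} (hA : A ∈ Kp p) : Mx (A * B) = Mx B := by
  refine le_antisymm (Mx_mul_le_right (Kp_entry_le hA)) ?_
  have hinv : B = A⁻¹ * (A * B) := by
    rw [← Matrix.mul_assoc, Matrix.nonsing_inv_mul A ((Matrix.isUnit_iff_isUnit_det A).mp hA.1),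
      Matrix.one_mul]
  calc Mx B = Mx (A⁻¹ * (A * B)) := by rw [← hinv]
    _ ≤ Mx (A * B) := Mx_mul_le_right (Kp_inv_entry_le hA)

lemma Mx_Kp_right {A B : M2} (hB : B ∈ Kp p) : Mx (A * B) = Mx A := by
  refine le_antisymm (Mx_mul_le_left (Kp_entry_le hB)) ?_
  have hinv : A = (A * B) * B⁻¹ := by
    rw [Matrix.mul_assoc, Matrix.mul_nonsing_inv B ((Matrix.isUnit_iff_isUnit_det B).mp hB.1),
      Matrix.mul_one]
  calc Mx A = Mx ((A * B) * B⁻¹) := by rw [← hinv]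
    _ ≤ Mx (A * B) := Mx_mul_le_left (Kp_inv_entry_le hB)

lemma Mx_smul (e : ℚ_[p]) (A : M2) : Mx (e • A) = ‖e‖ * Mx A := by
  unfold Mx
  simp only [Matrix.smul_apply, smul_eq_mul, norm_mul]
  rw [← mul_max_of_nonneg _ _ (norm_nonneg e), ← mul_max_of_nonneg _ _ (norm_nonneg e),
    ← mul_max_of_nonneg _ _ (norm_nonneg e)]

section TStuff

variable {p : ℕ} [Fact (Nat.Prime p)] {α β : ℚ_[p]}

/-- centralizer elements have the shape aI + cΔ -/
lemma central (hα0 : α ≠ 0) {t : Matrix (Fin 2) (Fin 2) ℚ_[p]}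
    (hcomm : t * !![0, α; 1, β] = !![0, α; 1, β] * t) :
    t = !![t 0 0, t 1 0 * α; t 1 0, t 0 0 + t 1 0 * β] := by
  have e00 : (t * !![0, α; 1, β]) 0 0 = (!![0, α; 1, β] * t) 0 0 := by rw [hcomm]
  have e01 : (t * !![0, α; 1, β]) 0 1 = (!![0, α; 1, β] * t) 0 1 := by rw [hcomm]
  simp [Matrix.mul_apply, Fin.sum_univ_two] at e00 e01
  have h01 : t 0 1 = t 1 0 * α := by rw [e00]; ring
  have h11 : t 1 1 = t 0 0 + t 1 0 * β := by
    have : α * t 1 1 = α * (t 0 0 + t 1 0 * β) := by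
      rw [← e01, h01]; ring
    exact mul_left_cancel₀ hα0 this
  conv_lhs => rw [Matrix.eta_fin_two t]
  rw [h01, h11]

/-- decomposition t = e • u with u in Kp, for invertible elements of the centralizer -/
lemma T_decomp (hα : ‖α‖ = 1) (hβ : ‖β‖ ≤ 1)
    (hirr : ∀ x : ℚ_[p], ‖x‖ ≤ 1 → 1 ≤ ‖x^2 - β * x - α‖)
    {t : Matrix (Fin 2) (Fin 2) ℚ_[p]} (ht : IsUnit t)
    (hcomm : t * !![0, α; 1, β] = !![0, α; 1, β] * t) :
    ∃ (e : ℚ_[p]) (u : Matrix (Fin 2) (Fin 2) ℚ_[p]),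
      e ≠ 0 ∧ u ∈ Kp p ∧ t = e • u ∧ ‖t.det‖ = ‖e‖^2 := by
  have hα0 : α ≠ 0 := by intro h; rw [h, norm_zero] at hα; norm_num at hα
  set a := t 0 0 with ha
  set c := t 1 0 with hc
  have hform : t = !![a, c * α; c, a + c * β] := central hα0 hcomm
  have hdet : t.det = a^2 + a*β*c - c^2*α := by
    rw [hform, Matrix.det_fin_two_of]; ring
  have hdn : ‖t.det‖ = max ‖a‖ ‖c‖ ^ 2 := by rw [hdet]; exact normQuad hα hβ hirr a c
  have hd0 : t.det ≠ 0 := ((Matrix.isUnit_iff_isUnit_det t).mp ht).ne_zero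
  have hac : ¬ (a = 0 ∧ c = 0) := fun ⟨h1, h2⟩ => hd0 (by rw [hdet, h1, h2]; ring)
  have hmaxpos : 0 < max ‖a‖ ‖c‖ := by
    rcases eq_or_ne a 0 with h | h
    · exact lt_of_lt_of_le (norm_pos_iff.mpr fun h2 => hac ⟨h, h2⟩) (le_max_right _ _)
    · exact lt_of_lt_of_le (norm_pos_iff.mpr h) (le_max_left _ _)
  have t01 : t 0 1 = c * α := by rw [hform]; simp
  have t11 : t 1 1 = a + c * β := by rw [hform]; simp
  have hentry : ∀ i j, ‖t i j‖ ≤ max ‖a‖ ‖c‖ := by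
    intro i j
    fin_cases i <;> fin_cases j
    · exact le_max_left _ _
    · show ‖t 0 1‖ ≤ _
      rw [t01, norm_mul, hα, mul_one]; exact le_max_right _ _
    · exact le_max_right _ _
    · show ‖t 1 1‖ ≤ _
      rw [t11]
      refine le_trans (nonarch _ _) (max_le (le_max_left _ _) ?_)
      rw [norm_mul]
      exact le_trans (mul_le_of_le_one_right (norm_nonneg c) hβ) (le_max_right _ _)
  -- choose e
  have main : ∀ e : ℚ_[p], e ≠ 0 → ‖e‖ = max ‖a‖ ‖c‖ →
      ∃ (e : ℚ_[p]) (u : Matrix (Fin 2) (Fin 2) ℚ_[p]),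
      e ≠ 0 ∧ u ∈ Kp p ∧ t = e • u ∧ ‖t.det‖ = ‖e‖^2 := by
    intro e he0 hee
    refine ⟨e, e⁻¹ • t, he0, ?_, ?_, by rw [hdn, hee]⟩
    · refine mem_Kp_of ?_ ?_
      · intro i j
        rw [Matrix.smul_apply, smul_eq_mul, norm_mul, norm_inv,
          inv_mul_le_one₀ (by rw [hee]; exact hmaxpos), hee]
        exact hentry i j
      · rw [Matrix.det_smul, Fintype.card_fin, norm_mul, norm_pow, norm_inv, hdn, hee]
        field_simp
    · rw [smul_smul, mul_inv_cancel₀ he0, one_smul]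
  by_cases hle : ‖c‖ ≤ ‖a‖
  · refine main a ?_ (max_eq_left hle).symm
    intro h
    rw [h, norm_zero] at hle
    exact hac ⟨h, norm_eq_zero.mp (le_antisymm hle (norm_nonneg c))⟩
  · push_neg at hle
    refine main c ?_ (max_eq_right hle.le).symm
    intro h
    rw [h, norm_zero] at hle
    exact absurd hle (not_lt.mpr (norm_nonneg a))

end TStuff

section Invariants

variable {p : ℕ} [Fact (Nat.Prime p)] {α β : ℚ_[p]}

/-- the integer index of a representative -/
def jOf : ℕ ⊕ {j : ℕ // 1 ≤ j} → ℕ := Sum.elim id Subtype.val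

/-- the side marker of a representative -/
noncomputable def sOf (p : ℕ) : ℕ ⊕ {j : ℕ // 1 ≤ j} → ℝ :=
  Sum.elim (fun _ => 1) (fun _ => (p : ℝ)⁻¹)

lemma rep_inl (j : ℕ) : rep18 p (Sum.inl j) = !![1, 0; 0, (p : ℚ_[p]) ^ j] := rfl

lemma rep_inr (j : {j : ℕ // 1 ≤ j}) :
    rep18 p (Sum.inr j) = !![0, 1; (p : ℚ_[p]) ^ (j : ℕ), 0] := by
  show dMat p j.1 * _ = _
  rw [dMat, Matrix.mul_fin_two]
  norm_num

lemma max_helper {x : ℝ} (h0 : 0 ≤ x) (h1 : x ≤ 1) : max (max (1:ℝ) 0) (max 0 x) = 1 := by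
  rw [max_eq_right h0, max_eq_left zero_le_one, max_eq_left h1]

lemma max_helper' {x : ℝ} (h0 : 0 ≤ x) (h1 : x ≤ 1) : max (max (0:ℝ) 1) (max x 0) = 1 := by
  rw [max_eq_left h0, max_eq_right zero_le_one, max_eq_left h1]

lemma Mx_rep (c : ℕ ⊕ {j : ℕ // 1 ≤ j}) : Mx (rep18 p c) = 1 := by
  have hle : ∀ j : ℕ, ((p:ℝ) ^ j)⁻¹ ≤ 1 :=
    fun j => inv_le_one_of_one_le₀ (one_le_pow₀ (one_lt_pR p).le)
  rcases c with j | j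
  · rw [rep_inl]
    unfold Mx
    norm_num
    exact hle j
  · rw [rep_inr]
    unfold Mx
    norm_num
    exact hle j

lemma det_rep_norm (c : ℕ ⊕ {j : ℕ // 1 ≤ j}) :
    ‖(rep18 p c).det‖ = (p : ℝ) ^ (-(jOf c : ℤ)) := by
  rcases c with j | j
  · rw [rep_inl, Matrix.det_fin_two_of]
    simp only [mul_zero, zero_mul, one_mul, sub_zero]
    exact Padic.norm_p_pow j
  · rw [rep_inr, Matrix.det_fin_two_of]
    simp only [mul_zero, zero_mul, one_mul, zero_sub, norm_neg]
    exact Padic.norm_p_pow (j : ℕ)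

lemma Mx_repq (c : ℕ ⊕ {j : ℕ // 1 ≤ j}) :
    Mx (rep18 p c * !![1, 0; 0, (p : ℚ_[p])]) = sOf p c := by
  rcases c with j | j
  · rw [rep_inl, Matrix.mul_fin_two]
    unfold Mx sOf
    simp only [Sum.elim_inl]
    norm_num
    exact mul_le_one₀ (inv_le_one_of_one_le₀ (one_le_pow₀ (one_lt_pR p).le))
      (by positivity) (inv_le_one_of_one_le₀ (one_lt_pR p).le)
  · rw [rep_inr, Matrix.mul_fin_two]
    unfold Mx sOf
    simp only [Sum.elim_inr]
    norm_num
    rw [← inv_pow]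
    calc ((p:ℝ)⁻¹) ^ (j:ℕ) ≤ (p:ℝ)⁻¹ ^ (1:ℕ) := by
          refine pow_le_pow_of_le_one (by positivity) ?_ j.2
          exact inv_le_one_of_one_le₀ (one_lt_pR p).le
      _ = (p:ℝ)⁻¹ := pow_one _

lemma q_conj {k : Matrix (Fin 2) (Fin 2) ℚ_[p]} (hk : k ∈ Ip p) :
    ∃ k' ∈ Kp p, k * !![1, 0; 0, (p : ℚ_[p])] = !![1, 0; 0, (p : ℚ_[p])] * k' := by
  refine ⟨!![k 0 0, p * k 0 1; k 1 0 / p, k 1 1], ?_, ?_⟩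
  · refine mem_Kp_of ?_ ?_
    · intro i j
      fin_cases i <;> fin_cases j <;> simp
      · exact Kp_entry_le hk.1 0 0
      · exact mul_le_one₀ (inv_le_one_of_one_le₀ (one_lt_pR p).le) (norm_nonneg _)
          (Kp_entry_le hk.1 0 1)
      · calc ‖k 1 0‖ * (p:ℝ) ≤ (p:ℝ)⁻¹ * (p:ℝ) :=
              mul_le_mul_of_nonneg_right (norm_le_inv_p hk.2) (pR_pos p).le
          _ = 1 := inv_mul_cancel₀ (ne_of_gt (pR_pos p))
      · exact Kp_entry_le hk.1 1 1
    · have heq : (!![k 0 0, (p:ℚ_[p]) * k 0 1; k 1 0 / p, k 1 1]).det = k.det := by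
        rw [Matrix.det_fin_two_of, Matrix.det_fin_two]
        field_simp [pQ_ne (p := p)]
      rw [heq]
      exact Kp_det_norm hk.1
  · ext i j
    fin_cases i <;> fin_cases j <;>
      · show _ = _
        simp only [Matrix.mul_apply, Fin.sum_univ_two, Matrix.cons_val_zero, Matrix.cons_val_one,
          Matrix.head_cons, Matrix.cons_val', Matrix.empty_val', Matrix.cons_val_fin_one,
          Matrix.head_fin_const, Fin.zero_eta, Fin.mk_one, Matrix.of_apply]
        field_simp [pQ_ne (p := p)]
        try ring

lemma decomp_inv (hα : ‖α‖ = 1) (hβ : ‖β‖ ≤ 1)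
    (hirr : ∀ x : ℚ_[p], ‖x‖ ≤ 1 → 1 ≤ ‖x^2 - β * x - α‖)
    (c : ℕ ⊕ {j : ℕ // 1 ≤ j}) {t k g : Matrix (Fin 2) (Fin 2) ℚ_[p]}
    (ht : IsUnit t) (hcomm : t * !![0, α; 1, β] = !![0, α; 1, β] * t)
    (hk : k ∈ Ip p) (hg : g = t * rep18 p c * k) :
    0 < Mx g ∧ ‖g.det‖ = Mx g ^ 2 * (p : ℝ) ^ (-(jOf c : ℤ))
      ∧ Mx (g * !![1, 0; 0, (p : ℚ_[p])]) = Mx g * sOf p c := by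
  obtain ⟨e, u, he0, huK, hteu, hdnorm⟩ := T_decomp hα hβ hirr ht hcomm
  have hkK : k ∈ Kp p := hk.1
  have hg1 : g = e • (u * (rep18 p c * k)) := by
    rw [hg, hteu, smul_mul_assoc, smul_mul_assoc, Matrix.mul_assoc]
  have hMg : Mx g = ‖e‖ := by
    rw [hg1, Mx_smul, Mx_Kp_left huK, Mx_Kp_right hkK, Mx_rep, mul_one]
  refine ⟨by rw [hMg]; exact norm_pos_iff.mpr he0, ?_, ?_⟩
  · rw [hMg, hg, Matrix.det_mul, Matrix.det_mul, norm_mul, norm_mul, hdnorm,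
      det_rep_norm, Kp_det_norm hkK, mul_one]
  · obtain ⟨k', hk'K, hconj⟩ := q_conj hk
    have hgq : g * !![1, 0; 0, (p : ℚ_[p])] = e • (u * (rep18 p c * !![1, 0; 0, (p:ℚ_[p])] * k')) := by
      rw [hg1, smul_mul_assoc, Matrix.mul_assoc, Matrix.mul_assoc, Matrix.mul_assoc, hconj,
        ← Matrix.mul_assoc (rep18 p c)]
    rw [hgq, Mx_smul, Mx_Kp_left huK, Mx_Kp_right hk'K, Mx_repq, hMg]

lemma index_unique (hα : ‖α‖ = 1) (hβ : ‖β‖ ≤ 1)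
    (hirr : ∀ x : ℚ_[p], ‖x‖ ≤ 1 → 1 ≤ ‖x^2 - β * x - α‖)
    {g : Matrix (Fin 2) (Fin 2) ℚ_[p]} {c c' : ℕ ⊕ {j : ℕ // 1 ≤ j}}
    {t k t' k' : Matrix (Fin 2) (Fin 2) ℚ_[p]}
    (ht : IsUnit t) (hcomm : t * !![0, α; 1, β] = !![0, α; 1, β] * t)
    (hk : k ∈ Ip p) (hg : g = t * rep18 p c * k)
    (ht' : IsUnit t') (hcomm' : t' * !![0, α; 1, β] = !![0, α; 1, β] * t')
    (hk' : k' ∈ Ip p) (hg' : g = t' * rep18 p c' * k') : c = c' := by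
  obtain ⟨hpos, h1, h2⟩ := decomp_inv hα hβ hirr c ht hcomm hk hg
  obtain ⟨-, h1', h2'⟩ := decomp_inv hα hβ hirr c' ht' hcomm' hk' hg'
  have hj : jOf c = jOf c' := by
    have := h1.symm.trans h1'
    have h3 : (p:ℝ) ^ (-(jOf c : ℤ)) = (p:ℝ) ^ (-(jOf c' : ℤ)) :=
      mul_left_cancel₀ (by positivity) this
    have := zpow_right_injective₀ (pR_pos p) (by exact_mod_cast (Fact.out : p.Prime).one_lt.ne') h3
    omega
  have hs : sOf p c = sOf p c' := mul_left_cancel₀ (ne_of_gt hpos) (h2.symm.trans h2')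
  have hp1 : (p:ℝ)⁻¹ ≠ 1 := by
    intro h
    have := inv_eq_one.mp h
    linarith [one_lt_pR p]
  rcases c with j | j <;> rcases c' with j' | j'
  · simp only [jOf, Sum.elim_inl, id] at hj
    rw [hj]
  · simp only [sOf, Sum.elim_inl, Sum.elim_inr] at hs
    exact absurd hs.symm hp1
  · simp only [sOf, Sum.elim_inl, Sum.elim_inr] at hs
    exact absurd hs hp1
  · simp only [jOf, Sum.elim_inr] at hj
    exact congrArg Sum.inr (Subtype.ext hj)

end Invariants

section Existence

variable {p : ℕ} [Fact (Nat.Prime p)] {α β : ℚ_[p]}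

lemma inv_comm {A B : Matrix (Fin 2) (Fin 2) ℚ_[p]} (hA : IsUnit A) (h : A * B = B * A) :
    A⁻¹ * B = B * A⁻¹ := by
  have hdu := (Matrix.isUnit_iff_isUnit_det A).mp hA
  calc A⁻¹ * B = A⁻¹ * B * (A * A⁻¹) := by rw [Matrix.mul_nonsing_inv _ hdu, Matrix.mul_one]
    _ = A⁻¹ * (B * A) * A⁻¹ := by
        rw [Matrix.mul_assoc (A⁻¹) B, Matrix.mul_assoc (A⁻¹), Matrix.mul_assoc B]
    _ = A⁻¹ * (A * B) * A⁻¹ := by rw [h]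
    _ = B * A⁻¹ := by rw [← Matrix.mul_assoc, Matrix.nonsing_inv_mul _ hdu, Matrix.one_mul]

lemma norm_p_pow_lt_one (i : ℕ) (hi : 1 ≤ i) : ‖(p : ℚ_[p]) ^ i‖ < 1 := by
  rw [norm_pow, Padic.norm_p]
  calc ((p:ℝ)⁻¹) ^ i ≤ (p:ℝ)⁻¹ ^ (1:ℕ) := by
        refine pow_le_pow_of_le_one (by positivity) ?_ hi
        exact inv_le_one_of_one_le₀ (one_lt_pR p).le
    _ = (p:ℝ)⁻¹ := pow_one _
    _ < 1 := inv_lt_one_of_one_lt₀ (one_lt_pR p)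

lemma mem_Ip_entries {a b c d : ℚ_[p]} (ha : ‖a‖ ≤ 1) (hb : ‖b‖ ≤ 1) (hc : ‖c‖ < 1)
    (hd : ‖d‖ ≤ 1) (hdet : ‖a*d - b*c‖ = 1) : !![a, b; c, d] ∈ Ip p := by
  refine mem_Ip_of ?_ ?_ ?_
  · intro i j
    fin_cases i <;> fin_cases j
    · simpa using ha
    · simpa using hb
    · simpa using hc.le
    · simpa using hd
  · simpa using hc
  · rw [Matrix.det_fin_two_of]
    exact hdet

/-- Existence of a double coset decomposition for the normalized matrix `[[x,1],[y,0]]`. -/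
lemma exists_normal (hα : ‖α‖ = 1) (hβ : ‖β‖ ≤ 1)
    (hirr : ∀ x : ℚ_[p], ‖x‖ ≤ 1 → 1 ≤ ‖x^2 - β * x - α‖)
    (x y : ℚ_[p]) (hy : y ≠ 0) :
    ∃ (c : ℕ ⊕ {j : ℕ // 1 ≤ j}) (t k : Matrix (Fin 2) (Fin 2) ℚ_[p]),
      (IsUnit t ∧ t * !![0, α; 1, β] = !![0, α; 1, β] * t) ∧ k ∈ Ip p ∧
      !![x, 1; y, 0] = t * rep18 p c * k := by
  have hα0 : α ≠ 0 := by intro h; rw [h, norm_zero] at hα; norm_num at hα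
  have hpQ : (p : ℚ_[p]) ≠ 0 := pQ_ne p
  have hpnorm : ‖(p:ℚ_[p])‖ < 1 := by
    rw [Padic.norm_p]; exact inv_lt_one_of_one_lt₀ (one_lt_pR p)
  by_cases hx : ‖x‖ < 1
  · -- first column is "smaller": w-type or d-type by valuation of y
    obtain ⟨n, u, hu, hyeq, hyn⟩ := val_decomp hy
    have hu0 : u ≠ 0 := by intro h; rw [h, norm_zero] at hu; norm_num at hu
    rcases le_or_gt 1 n with hn | hn
    · -- w-type, j = n ≥ 1
      have hj1 : 1 ≤ n.toNat := by omega
      have hpn : (p:ℚ_[p]) ^ (n.toNat : ℕ) = (p:ℚ_[p]) ^ n := by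
        rw [← zpow_natCast]
        congr 1
        omega
      refine ⟨Sum.inr ⟨n.toNat, hj1⟩, 1, !![u, 0; x, 1],
        ⟨isUnit_one, by rw [Matrix.one_mul, Matrix.mul_one]⟩, ?_, ?_⟩
      · refine mem_Ip_entries hu.le (by simp) hx norm_one.le ?_
        rw [mul_one, zero_mul, sub_zero]
        exact hu
      · rw [Matrix.one_mul, rep_inr, Matrix.mul_fin_two]
        have h20 : (p:ℚ_[p]) ^ (n.toNat : ℕ) * u = y := by rw [hpn, hyeq]; ring
        norm_num [h20]
    · -- d-type, j = -n ≥ 0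
      set i : ℕ := (-n).toNat with hidef
      have hin : (i : ℤ) = -n := Int.toNat_of_nonneg (by omega)
      have hypi : y * (p:ℚ_[p]) ^ (i:ℕ) = u := by
        rw [hyeq, mul_assoc, ← zpow_natCast, hin, ← zpow_add₀ hpQ]
        norm_num
      set a : ℚ_[p] := (p:ℚ_[p])^(i+1) - β with hadef
      have hanorm : ‖a‖ ≤ 1 :=
        le_trans (nonarch_sub _ _) (max_le (norm_p_pow_le_one p (i+1)) hβ)
      set s : Matrix (Fin 2) (Fin 2) ℚ_[p] := !![a, α; 1, a + β] with hsdef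
      have hsdet : s.det = a^2 + a*β - α := by rw [hsdef, Matrix.det_fin_two_of]; ring
      have hsdn : 1 ≤ ‖s.det‖ := by
        have h1 := hirr (-a) (by rwa [norm_neg])
        have h2 : (-a)^2 - β*(-a) - α = a^2 + a*β - α := by ring
        rw [h2] at h1
        rw [hsdet]
        exact h1
      have hs0 : s.det ≠ 0 := by
        intro h; rw [h, norm_zero] at hsdn; linarith
      have hsu : IsUnit s := (Matrix.isUnit_iff_isUnit_det s).mpr (isUnit_iff_ne_zero.mpr hs0)
      have hsdu : IsUnit s.det := isUnit_iff_ne_zero.mpr hs0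
      have hscomm : s * !![0, α; 1, β] = !![0, α; 1, β] * s := by
        rw [hsdef, Matrix.mul_fin_two, Matrix.mul_fin_two]
        congr 1 <;> ring_nf
      have hinvcomm := inv_comm hsu hscomm
      -- the Iwahori factor
      set κ : Matrix (Fin 2) (Fin 2) ℚ_[p] :=
        !![α, a * (p:ℚ_[p])^(i:ℕ); (p:ℚ_[p]), 1] * (!![1, 0; 0, u⁻¹] * !![1, 0; x, 1]) with hκdef
      have hapi : ‖a * (p:ℚ_[p])^(i:ℕ)‖ ≤ 1 := by
        rw [norm_mul]
        exact mul_le_one₀ hanorm (norm_nonneg _) (norm_p_pow_le_one p i)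
      have hκIp : κ ∈ Ip p := by
        refine Ip_mul ?_ (Ip_mul ?_ ?_)
        · refine mem_Ip_entries hα.le hapi hpnorm norm_one.le ?_
          have hsmall : ‖a * (p:ℚ_[p])^(i:ℕ) * (p:ℚ_[p])‖ < 1 := by
            rw [norm_mul]
            calc ‖a * (p:ℚ_[p])^(i:ℕ)‖ * ‖(p:ℚ_[p])‖ ≤ 1 * ‖(p:ℚ_[p])‖ :=
                  mul_le_mul_of_nonneg_right hapi (norm_nonneg _)
              _ = ‖(p:ℚ_[p])‖ := one_mul _
              _ < 1 := hpnorm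
          rw [mul_one, sub_eq_add_neg, Padic.add_eq_max_of_ne, norm_neg, hα]
          · exact max_eq_left hsmall.le
          · rw [norm_neg, hα]
            exact (ne_of_lt hsmall).symm
        · refine mem_Ip_entries norm_one.le (by simp) (by simp) ?_ ?_
          · rw [norm_inv, hu, inv_one]
          · rw [one_mul, zero_mul, sub_zero, norm_inv, hu, inv_one]
        · refine mem_Ip_entries norm_one.le (by simp) hx norm_one.le (by norm_num)
      refine ⟨Sum.inl i, y • s⁻¹, κ, ⟨?_, ?_⟩, hκIp, ?_⟩
      · refine (Matrix.isUnit_iff_isUnit_det _).mpr (isUnit_iff_ne_zero.mpr ?_)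
        rw [Matrix.det_smul, Fintype.card_fin, Matrix.det_nonsing_inv, Ring.inverse_eq_inv']
        exact mul_ne_zero (pow_ne_zero 2 hy) (inv_ne_zero hs0)
      · rw [smul_mul_assoc, hinvcomm, Matrix.mul_smul]
      · -- the matrix identity
        have main : s * !![x, 1; y, 0] = y • (rep18 p (Sum.inl i) * κ) := by
          rw [rep_inl, hκdef, hsdef]
          ext i' j'
          fin_cases i' <;> fin_cases j' <;>
            · show _ = _
              simp only [Matrix.mul_apply, Fin.sum_univ_two, Matrix.cons_val_zero,
                Matrix.cons_val_one, Matrix.head_cons, Matrix.cons_val', Matrix.empty_val',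
                Matrix.cons_val_fin_one, Matrix.head_fin_const, Matrix.smul_apply, smul_eq_mul,
                Fin.zero_eta, Fin.mk_one, Matrix.of_apply, Matrix.cons_val_zero, hadef]
              try rw [← hypi]
              field_simp
              try ring
        calc !![x, 1; y, 0] = s⁻¹ * (s * !![x, 1; y, 0]) := by
              rw [← Matrix.mul_assoc, Matrix.nonsing_inv_mul _ hsdu, Matrix.one_mul]
          _ = s⁻¹ * (y • (rep18 p (Sum.inl i) * κ)) := by rw [main]
          _ = y • (s⁻¹ * (rep18 p (Sum.inl i) * κ)) := Matrix.mul_smul _ _ _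
          _ = (y • s⁻¹) * (rep18 p (Sum.inl i) * κ) := (smul_mul_assoc _ _ _).symm
          _ = (y • s⁻¹) * rep18 p (Sum.inl i) * κ := by rw [Matrix.mul_assoc]
  · -- ‖x‖ ≥ 1 : invert
    push_neg at hx
    have hquad := normQuad hα hβ hirr x y
    have hm1 : 1 ≤ max ‖x‖ ‖y‖ := le_trans hx (le_max_left _ _)
    have hNn : ‖x^2 + x*β*y - y^2*α‖ = max ‖x‖ ‖y‖ ^ 2 := hquad
    have hN0 : x^2 + x*β*y - y^2*α ≠ 0 := by
      intro h
      rw [h, norm_zero] at hNn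
      nlinarith
    have hσn : ‖(x + β*y)/(x^2 + x*β*y - y^2*α)‖ ≤ 1 := by
      rw [norm_div, hNn, div_le_one (by nlinarith)]
      calc ‖x + β*y‖ ≤ max ‖x‖ ‖β*y‖ := nonarch _ _
        _ ≤ max ‖x‖ ‖y‖ := by
            refine max_le (le_max_left _ _) ?_
            rw [norm_mul]
            exact le_trans (mul_le_of_le_one_left (norm_nonneg y) hβ) (le_max_right _ _)
        _ ≤ max ‖x‖ ‖y‖ ^ 2 := by nlinarith
    have htt0 : -y/(x^2 + x*β*y - y^2*α) ≠ 0 := div_ne_zero (neg_ne_zero.mpr hy) hN0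
    have ht₂det : (!![x, y*α; y, x + y*β]).det = x^2 + x*β*y - y^2*α := by
      rw [Matrix.det_fin_two_of]; ring
    have ht₂u : IsUnit (!![x, y*α; y, x + y*β]) :=
      (Matrix.isUnit_iff_isUnit_det _).mpr (isUnit_iff_ne_zero.mpr (by rw [ht₂det]; exact hN0))
    have ht₂comm : !![x, y*α; y, x + y*β] * !![0, α; 1, β]
        = !![0, α; 1, β] * !![x, y*α; y, x + y*β] := by
      rw [Matrix.mul_fin_two, Matrix.mul_fin_two]
      congr 1 <;> ring_nf
    obtain ⟨n, u, hu, htteq, httn⟩ := val_decomp htt0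
    have hu0 : u ≠ 0 := by intro h; rw [h, norm_zero] at hu; norm_num at hu
    rcases le_or_gt 0 n with hn | hn
    · -- d-type, j = n ≥ 0
      have hpn : (p:ℚ_[p]) ^ (n.toNat : ℕ) = (p:ℚ_[p]) ^ n := by
        rw [← zpow_natCast]; congr 1; omega
      refine ⟨Sum.inl n.toNat, !![x, y*α; y, x + y*β],
        !![1, (x + β*y)/(x^2 + x*β*y - y^2*α); 0, u], ⟨ht₂u, ht₂comm⟩, ?_, ?_⟩
      · refine mem_Ip_entries norm_one.le hσn (by simp) hu.le ?_
        rw [one_mul, mul_zero, sub_zero]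
        exact hu
      · rw [rep_inl]
        have hstep : (p:ℚ_[p]) ^ (n.toNat : ℕ) * u = -y/(x^2 + x*β*y - y^2*α) := by
          rw [hpn, htteq]; ring
        have hppow : (p:ℚ_[p]) ^ (n.toNat : ℕ) ≠ 0 := pow_ne_zero _ hpQ
        have hueq : u = -y / ((x^2 + x*β*y - y^2*α) * (p:ℚ_[p]) ^ (n.toNat : ℕ)) := by
          rw [eq_div_iff (mul_ne_zero hN0 hppow)]
          have h1 := congrArg (· * (x^2 + x*β*y - y^2*α)) hstep
          rw [div_mul_cancel₀ _ hN0] at h1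
          linear_combination h1
        set N := x^2 + x*β*y - y^2*α with hN
        ext i' j'
        fin_cases i' <;> fin_cases j' <;>
          · show _ = _
            simp only [Matrix.mul_apply, Fin.sum_univ_two, Matrix.cons_val_zero,
              Matrix.cons_val_one, Matrix.head_cons, Matrix.cons_val', Matrix.empty_val',
              Matrix.cons_val_fin_one, Matrix.head_fin_const, Fin.zero_eta, Fin.mk_one,
              Matrix.of_apply, hueq]
            field_simp
            try rw [hN]
            try ring
    · -- w-type, j = -n ≥ 1
      set i : ℕ := (-n).toNat with hidef
      have hin : (i : ℤ) = -n := Int.toNat_of_nonneg (by omega)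
      have hi1 : 1 ≤ i := by omega
      have httpi : (-y/(x^2 + x*β*y - y^2*α)) * (p:ℚ_[p]) ^ (i:ℕ) = u := by
        rw [htteq, mul_assoc, ← zpow_natCast, hin, ← zpow_add₀ hpQ]
        norm_num
      have hu'n : ‖(-y/(x^2 + x*β*y - y^2*α)) * (p:ℚ_[p]) ^ (i:ℕ)‖ = 1 := by
        rw [httpi]; exact hu
      have hu'0 : (-y/(x^2 + x*β*y - y^2*α)) * (p:ℚ_[p]) ^ (i:ℕ) ≠ 0 := by
        rw [httpi]; exact hu0
      have hαu' : ‖α * ((-y/(x^2 + x*β*y - y^2*α)) * (p:ℚ_[p]) ^ (i:ℕ))‖ = 1 := by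
        rw [norm_mul, hα, hu'n, one_mul]
      have hαu'0 : α * ((-y/(x^2 + x*β*y - y^2*α)) * (p:ℚ_[p]) ^ (i:ℕ)) ≠ 0 :=
        mul_ne_zero hα0 hu'0
      have hg1 : (-(x^2 + x*β*y - y^2*α) / (α * y * (p:ℚ_[p])^(i:ℕ))) = (α * ((-y/(x^2 + x*β*y - y^2*α)) * (p:ℚ_[p])^(i:ℕ)))⁻¹ := by
        symm
        apply inv_eq_of_mul_eq_one_right
        set N := x^2 + x*β*y - y^2*α with hN
        field_simp
      have hcorner : ‖-(β*(p:ℚ_[p])^(i:ℕ)*(-(x^2 + x*β*y - y^2*α) / (α * y * (p:ℚ_[p])^(i:ℕ))))‖ < 1 := by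
        rw [hg1, norm_neg, norm_mul, norm_mul, norm_inv, hαu', inv_one, mul_one]
        calc ‖β‖ * ‖(p:ℚ_[p])^(i:ℕ)‖ ≤ 1 * ‖(p:ℚ_[p])^(i:ℕ)‖ :=
              mul_le_mul_of_nonneg_right hβ (norm_nonneg _)
          _ = ‖(p:ℚ_[p])^(i:ℕ)‖ := one_mul _
          _ < 1 := norm_p_pow_lt_one i hi1
      refine ⟨Sum.inr ⟨i, hi1⟩,
        (-y/(x^2 + x*β*y - y^2*α)) • (!![x, y*α; y, x + y*β] * !![0, α; 1, β]),
        !![(-(x^2 + x*β*y - y^2*α) / (α * y * (p:ℚ_[p])^(i:ℕ))), 0;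
           -(β*(p:ℚ_[p])^(i:ℕ)*(-(x^2 + x*β*y - y^2*α) / (α * y * (p:ℚ_[p])^(i:ℕ)))), 1]
          * !![1, (x + β*y)/(x^2 + x*β*y - y^2*α); 0, 1], ⟨?_, ?_⟩, ?_, ?_⟩
      · refine (Matrix.isUnit_iff_isUnit_det _).mpr (isUnit_iff_ne_zero.mpr ?_)
        rw [Matrix.det_smul, Fintype.card_fin, Matrix.det_mul, ht₂det]
        have hdΔ : (!![0, α; 1, β]).det = -α := by rw [Matrix.det_fin_two_of]; ring
        rw [hdΔ]
        exact mul_ne_zero (pow_ne_zero 2 htt0) (mul_ne_zero hN0 (neg_ne_zero.mpr hα0))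
      · have hA : !![x, y*α; y, x + y*β] * !![0, α; 1, β] * !![0, α; 1, β]
            = !![0, α; 1, β] * (!![x, y*α; y, x + y*β] * !![0, α; 1, β]) := by
          rw [← Matrix.mul_assoc, ← ht₂comm]
        rw [smul_mul_assoc, hA, Matrix.mul_smul]
      · refine Ip_mul ?_ ?_
        · refine mem_Ip_entries ?_ (by simp) hcorner norm_one.le ?_
          · rw [hg1, norm_inv, hαu', inv_one]
          · rw [mul_one, zero_mul, sub_zero, hg1, norm_inv, hαu', inv_one]
        · refine mem_Ip_entries norm_one.le hσn (by simp) norm_one.le (by norm_num)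
      · -- matrix identity
        rw [rep_inr]
        have hppow : (p:ℚ_[p]) ^ (i:ℕ) ≠ 0 := pow_ne_zero _ hpQ
        have I1 : !![x, 1; y, 0]
            = !![x, y*α; y, x + y*β] * (!![1, 0; 0, -y/(x^2 + x*β*y - y^2*α)]
              * !![1, (x + β*y)/(x^2 + x*β*y - y^2*α); 0, 1]) := by
          set N := x^2 + x*β*y - y^2*α with hN
          ext i' j'
          fin_cases i' <;> fin_cases j' <;>
            · show _ = _
              simp only [Matrix.mul_apply, Fin.sum_univ_two, Matrix.cons_val_zero,
                Matrix.cons_val_one, Matrix.head_cons, Matrix.cons_val', Matrix.empty_val',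
                Matrix.cons_val_fin_one, Matrix.head_fin_const, Fin.zero_eta, Fin.mk_one,
                Matrix.of_apply]
              field_simp
              try rw [hN]
              try ring
        have I2 : (-y/(x^2 + x*β*y - y^2*α)) • (!![0, α; 1, β]
              * (!![0, 1; (p:ℚ_[p])^(i:ℕ), 0]
                * !![(-(x^2 + x*β*y - y^2*α) / (α * y * (p:ℚ_[p])^(i:ℕ))), 0;
                      -(β*(p:ℚ_[p])^(i:ℕ)*(-(x^2 + x*β*y - y^2*α) / (α * y * (p:ℚ_[p])^(i:ℕ)))), 1]))
            = !![1, 0; 0, -y/(x^2 + x*β*y - y^2*α)] := by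
          set N := x^2 + x*β*y - y^2*α with hN
          ext i' j'
          fin_cases i' <;> fin_cases j' <;>
            · show _ = _
              simp only [Matrix.mul_apply, Fin.sum_univ_two, Matrix.cons_val_zero,
                Matrix.cons_val_one, Matrix.head_cons, Matrix.cons_val', Matrix.empty_val',
                Matrix.cons_val_fin_one, Matrix.head_fin_const, Fin.zero_eta, Fin.mk_one,
                Matrix.of_apply, Matrix.smul_apply, smul_eq_mul]
              field_simp [hα0, hy, hN0, hppow]
              try rw [hN]
              try ring
        calc !![x, 1; y, 0]
            = !![x, y*α; y, x + y*β]
              * ((-y/(x^2 + x*β*y - y^2*α)) • (!![0, α; 1, β]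
                * (!![0, 1; (p:ℚ_[p])^(i:ℕ), 0]
                  * !![(-(x^2 + x*β*y - y^2*α) / (α * y * (p:ℚ_[p])^(i:ℕ))), 0;
                      -(β*(p:ℚ_[p])^(i:ℕ)*(-(x^2 + x*β*y - y^2*α) / (α * y * (p:ℚ_[p])^(i:ℕ)))), 1]))
                * !![1, (x + β*y)/(x^2 + x*β*y - y^2*α); 0, 1]) := by
              rw [I2]
              exact I1
          _ = (-y/(x^2 + x*β*y - y^2*α)) • (!![x, y*α; y, x + y*β] * !![0, α; 1, β])
              * !![0, 1; (p:ℚ_[p])^(i:ℕ), 0]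
              * (!![(-(x^2 + x*β*y - y^2*α) / (α * y * (p:ℚ_[p])^(i:ℕ))), 0;
                   -(β*(p:ℚ_[p])^(i:ℕ)*(-(x^2 + x*β*y - y^2*α) / (α * y * (p:ℚ_[p])^(i:ℕ)))), 1]
                * !![1, (x + β*y)/(x^2 + x*β*y - y^2*α); 0, 1]) := by
              simp only [smul_mul_assoc, Matrix.mul_smul, Matrix.mul_assoc]

end Existence

end Aux18

/-- In the inert case, the double cosets `T_Δ d_j I_p` (j ≥ 0) and `T_Δ d_j w I_p` (j ≥ 1)
are pairwise disjoint with union `GL₂(ℚ_p)`, where `T_Δ` is the centralizer of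
`Δ = [[0, α], [1, β]]`. -/
theorem stmt18 (p : ℕ) [Fact (Nat.Prime p)] (α β : ℚ_[p])
    (hα : ‖α‖ = 1) (hβ : ‖β‖ ≤ 1)
    (hirr : ∀ x : ℚ_[p], ‖x‖ ≤ 1 → 1 ≤ ‖x^2 - β * x - α‖)
    (g : Matrix (Fin 2) (Fin 2) ℚ_[p]) (hg : IsUnit g) :
    ∃! c : ℕ ⊕ {j : ℕ // 1 ≤ j}, ∃ t k : Matrix (Fin 2) (Fin 2) ℚ_[p],
      (IsUnit t ∧ t * !![0, α; 1, β] = !![0, α; 1, β] * t) ∧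
      k ∈ Ip p ∧ g = t * rep18 p c * k := by
  obtain ⟨A, B, C, D, hg4⟩ : ∃ A B C D, g = !![A, B; C, D] :=
    ⟨_, _, _, _, Matrix.eta_fin_two g⟩
  subst hg4
  have hdetg : (!![A, B; C, D]).det ≠ 0 := ((Matrix.isUnit_iff_isUnit_det _).mp hg).ne_zero
  have hdet2 : (!![A, B; C, D]).det = A * D - B * C := Matrix.det_fin_two_of A B C D
  have hN2n : ‖B^2 + B*β*D - D^2*α‖ = max ‖B‖ ‖D‖ ^ 2 := Aux18.normQuad hα hβ hirr B D
  have hBD : ¬(B = 0 ∧ D = 0) := fun ⟨h1, h2⟩ => hdetg (by rw [hdet2, h1, h2]; ring)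
  have hN2 : B^2 + B*β*D - D^2*α ≠ 0 := by
    intro h
    rw [h, norm_zero] at hN2n
    have hmax : max ‖B‖ ‖D‖ = 0 := by
      nlinarith [le_max_left ‖B‖ ‖D‖, norm_nonneg B, norm_nonneg D, le_max_right ‖B‖ ‖D‖]
    exact hBD ⟨norm_eq_zero.mp (le_antisymm (hmax ▸ le_max_left _ _) (norm_nonneg _)),
      norm_eq_zero.mp (le_antisymm (hmax ▸ le_max_right _ _) (norm_nonneg _))⟩
  have hy : (B*C - A*D)/(B^2 + B*β*D - D^2*α) ≠ 0 := by
    refine div_ne_zero ?_ hN2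
    intro h
    apply hdetg
    rw [hdet2]
    linear_combination -h
  have hfact : !![A, B; C, D] = !![B, D*α; D, B + D*β] *
      !![((B + D*β)*A - D*α*C)/(B^2 + B*β*D - D^2*α), 1;
         (B*C - A*D)/(B^2 + B*β*D - D^2*α), 0] := by
    set N := B^2 + B*β*D - D^2*α with hN
    ext i j
    fin_cases i <;> fin_cases j <;>
      · show _ = _
        simp only [Matrix.mul_apply, Fin.sum_univ_two, Matrix.cons_val_zero,
          Matrix.cons_val_one, Matrix.head_cons, Matrix.cons_val', Matrix.empty_val',
          Matrix.cons_val_fin_one, Matrix.head_fin_const, Fin.zero_eta, Fin.mk_one,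
          Matrix.of_apply]
        field_simp
        try rw [hN]
        try ring
  have ht₁comm : !![B, D*α; D, B + D*β] * !![0, α; 1, β]
      = !![0, α; 1, β] * !![B, D*α; D, B + D*β] := by
    rw [Matrix.mul_fin_two, Matrix.mul_fin_two]
    congr 1 <;> ring_nf
  have ht₁u : IsUnit !![B, D*α; D, B + D*β] := by
    refine (Matrix.isUnit_iff_isUnit_det _).mpr (isUnit_iff_ne_zero.mpr ?_)
    rw [Matrix.det_fin_two_of]
    intro h
    apply hN2
    linear_combination h
  obtain ⟨c, t', k, ⟨ht'u, ht'c⟩, hkI, heq⟩ := Aux18.exists_normal hα hβ hirr _ _ hy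
  have hcomm2 : (!![B, D*α; D, B + D*β] * t') * !![0, α; 1, β]
      = !![0, α; 1, β] * (!![B, D*α; D, B + D*β] * t') := by
    rw [Matrix.mul_assoc, ht'c, ← Matrix.mul_assoc, ht₁comm, Matrix.mul_assoc]
  have hmain : !![A, B; C, D] = (!![B, D*α; D, B + D*β] * t') * rep18 p c * k := by
    rw [hfact, heq, ← Matrix.mul_assoc, ← Matrix.mul_assoc]
  refine ⟨c, ⟨!![B, D*α; D, B + D*β] * t', k, ⟨ht₁u.mul ht'u, hcomm2⟩, hkI, hmain⟩, ?_⟩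
  rintro c' ⟨t'', k'', ⟨hu'', hc''⟩, hk'', hg''⟩
  exact Aux18.index_unique hα hβ hirr hu'' hc'' hk'' hg'' (ht₁u.mul ht'u) hcomm2 hkI hmain
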